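/- Let u : ℝ³ → ℝ be measurable with u² locally integrable, and suppose u is not almost everywhere zero (equivalently, ∫_{B(0,R₀)} u(y)² dy > 0 for some R₀ > 0). Then there exists c > 0 such that the Newtonian potential satisfies φ_u(x) ≥ c/(1 + |x|) for all x ∈ ℝ³. -/
import Mathlib


open MeasureTheory Real Filter Metric

noncomputable section

abbrev E3 := EuclideanSpace ℝ (Fin 3)

/-- Newtonian potential of `u²`. -/
def phi (u : E3 → ℝ) (x : E3) : ℝ := ∫ y, u y ^ 2 / (4 * π * ‖x - y‖)

/-- Dirichlet energy `A(u) = ∫ |∇u|²`. -/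
def Aen (u : E3 → ℝ) : ℝ := ∫ x, ‖gradient u x‖ ^ 2

/-- Coulomb energy `B(u)`. -/
def Ben (u : E3 → ℝ) : ℝ := ∫ x, ∫ y, u x ^ 2 * u y ^ 2 / (4 * π * ‖x - y‖)

/-- `C_p(u) = ∫ |u|^(p+1)`. -/
def Cen (p : ℝ) (u : E3 → ℝ) : ℝ := ∫ x, |u x| ^ (p + 1)

/-- The energy functional `I_{μ,p}`. -/
def energy (μ p : ℝ) (u : E3 → ℝ) : ℝ :=
  (1/2) * Aen u + (1/4) * Ben u - (μ / (p + 1)) * Cen p u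

/-- The Laplacian as the sum of the pure second derivatives. -/
def laplacian (u : E3 → ℝ) (x : E3) : ℝ :=
  ∑ i : Fin 3,
    iteratedFDeriv ℝ 2 u x ![EuclideanSpace.single i 1, EuclideanSpace.single i 1]

/-- A finite-energy classical solution of `-Δu + φ_u u = μ |u|^{p-1} u`. -/
structure IsFESolution (p μ : ℝ) (u : E3 → ℝ) : Prop where
  smooth : ContDiff ℝ 2 u
  finA : Integrable (fun x => ‖gradient u x‖ ^ 2)
  finB : Integrable (fun z : E3 × E3 => u z.1 ^ 2 * u z.2 ^ 2 / (4 * π * ‖z.1 - z.2‖))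
  finC : Integrable (fun x => |u x| ^ (p + 1))
  phiInt : ∀ x, Integrable (fun y => u y ^ 2 / (4 * π * ‖x - y‖))
  eq : ∀ x, -laplacian u x + phi u x * u x = μ * |u x| ^ (p - 1) * u x

/-- A radial function on `ℝ³`. -/
def IsRadial (u : E3 → ℝ) : Prop := ∃ f : ℝ → ℝ, ∀ x, u x = f ‖x‖

/-- The Newtonian potential of `u²` as a `[0,∞]`-valued integral. -/
def phiL (u : E3 → ℝ) (x : E3) : ENNReal :=
  ∫⁻ y, ENNReal.ofReal (u y ^ 2 / (4 * π * ‖x - y‖))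

/-- lower bound `φ_u(x) ≥ c/(1+|x|)` for a nontrivial charge. -/
theorem newtonian_potential_lower_bound (u : E3 → ℝ) (hmeas : Measurable u)
    (hloc : LocallyIntegrable (fun x => u x ^ 2) (volume : Measure E3))
    (hne : ∃ R₀ > 0, 0 < ∫ y in ball (0 : E3) R₀, u y ^ 2) :
    ∃ c > 0, ∀ x : E3, ENNReal.ofReal (c / (1 + ‖x‖)) ≤ phiL u x := by
  obtain ⟨R₀, hR₀, hI⟩ := hne
  set I := ∫ y in ball (0 : E3) R₀, u y ^ 2 with hIdef
  have hπ : (0 : ℝ) < π := Real.pi_pos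
  refine ⟨I / (4 * π * (1 + R₀)), by positivity, fun x => ?_⟩
  set M : ℝ := 4 * π * (1 + R₀) * (1 + ‖x‖) with hM
  have hMpos : 0 < M := by positivity
  have hint : IntegrableOn (fun y => u y ^ 2) (ball (0 : E3) R₀) volume :=
    (hloc.integrableOn_isCompact (isCompact_closedBall 0 R₀)).mono_set
      ball_subset_closedBall
  -- step 1: lintegral over ball of ofReal (u y ^2 / M) equals ofReal (I / M)
  have h1 : (∫⁻ y in ball (0 : E3) R₀, ENNReal.ofReal (u y ^ 2 / M))
      = ENNReal.ofReal (I / M) := by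
    have : ∀ y : E3, ENNReal.ofReal (u y ^ 2 / M)
        = ENNReal.ofReal (u y ^ 2) * ENNReal.ofReal (1 / M) := by
      intro y
      rw [← ENNReal.ofReal_mul (by positivity)]
      ring_nf
    simp only [this]
    rw [lintegral_mul_const' _ _ (by simp),
      ← ofReal_integral_eq_lintegral_ofReal hint
        (Filter.Eventually.of_forall fun y => sq_nonneg _),
      ← ENNReal.ofReal_mul (le_of_lt hI)]
    ring_nf
  -- step 2: a.e. pointwise bound on the ball
  have h2 : (∫⁻ y in ball (0 : E3) R₀, ENNReal.ofReal (u y ^ 2 / M))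
      ≤ ∫⁻ y in ball (0 : E3) R₀, ENNReal.ofReal (u y ^ 2 / (4 * π * ‖x - y‖)) := by
    refine lintegral_mono_ae ?_
    have hx : ∀ᵐ y ∂(volume.restrict (ball (0 : E3) R₀)), y ≠ x := by
      refine ae_restrict_of_ae ?_
      have : volume ({x} : Set E3) = 0 := measure_singleton x
      filter_upwards [measure_eq_zero_iff_ae_notMem.mp this] with y hy
      simpa using hy
    filter_upwards [hx, ae_restrict_mem measurableSet_ball] with y hy hyball
    apply ENNReal.ofReal_le_ofReal
    have hnorm : 0 < ‖x - y‖ := by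
      exact norm_sub_pos_iff.mpr (Ne.symm hy)
    have hle : ‖x - y‖ ≤ (1 + R₀) * (1 + ‖x‖) := by
      have h1 : ‖x - y‖ ≤ ‖x‖ + ‖y‖ := norm_sub_le x y
      have h2 : ‖y‖ < R₀ := by simpa using mem_ball_iff_norm.mp hyball
      have h3 : 0 ≤ ‖x‖ := norm_nonneg x
      nlinarith
    apply div_le_div_of_nonneg_left (sq_nonneg _) (by positivity)
    calc 4 * π * ‖x - y‖ ≤ 4 * π * ((1 + R₀) * (1 + ‖x‖)) := by
          exact mul_le_mul_of_nonneg_left hle (by positivity)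
      _ = M := by rw [hM]; ring
  -- step 3: restrict ≤ full
  have h3 : (∫⁻ y in ball (0 : E3) R₀, ENNReal.ofReal (u y ^ 2 / (4 * π * ‖x - y‖)))
      ≤ phiL u x := setLIntegral_le_lintegral _ _
  have key : ENNReal.ofReal (I / M) ≤ phiL u x := h1 ▸ (h2.trans h3)
  refine le_trans (le_of_eq ?_) key
  congr 1
  rw [hM, div_div]
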